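/- Let γ : [0, L] → ℝ² be a continuously differentiable unit-speed curve whose derivative γ' is 1-Lipschitz as a map into the unit circle (i.e., for all t < s the angle between γ'(s) and γ'(t) is at most s − t). Then for any t and s with t < s < t + π, the chord length satisfies |γ(s) − γ(t)| ≥ 2·sin((s − t)/2). -/

import Mathlib

open Real

/-- Chord-length lower bound for a unit-speed curve with 1-Lipschitz unit tangent:
`‖γ s - γ t‖ ≥ 2 sin ((s - t)/2)` for `t < s < t + π`. -/
theorem chord_length_lower_bound
    (L : ℝ) (γ γ' : ℝ → EuclideanSpace ℝ (Fin 2))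
    (hderiv : ∀ t ∈ Set.Icc (0:ℝ) L, HasDerivAt γ (γ' t) t)
    (hunit : ∀ t ∈ Set.Icc (0:ℝ) L, ‖γ' t‖ = 1)
    (hlip : ∀ t s : ℝ, t ∈ Set.Icc (0:ℝ) L → s ∈ Set.Icc (0:ℝ) L → t ≤ s → s - t ≤ π →
      Real.cos (s - t) ≤ (inner ℝ (γ' s) (γ' t) : ℝ))
    (t s : ℝ) (ht : 0 ≤ t) (hts : t < s) (hsL : s ≤ L) (hspi : s < t + π) :
    2 * Real.sin ((s - t) / 2) ≤ ‖γ s - γ t‖ := by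
  have hIcc : Set.Icc t s ⊆ Set.Icc (0:ℝ) L := Set.Icc_subset_Icc ht hsL
  -- Step 1: for u ∈ Ioc t s, sin (u - t) ≤ ⟪γ' u, γ u - γ t⟫
  have step1 : ∀ u ∈ Set.Ioc t s, Real.sin (u - t) ≤ (inner ℝ (γ' u) (γ u - γ t) : ℝ) := by
    intro u hu
    have huL : u ∈ Set.Icc (0:ℝ) L := hIcc ⟨le_of_lt hu.1, hu.2⟩
    set χ : ℝ → ℝ := fun τ => (inner ℝ (γ' u) (γ τ) : ℝ) + Real.sin (u - τ) with hχ
    have hd : ∀ τ ∈ Set.Icc t u, HasDerivAt χ ((inner ℝ (γ' u) (γ' τ) : ℝ) - Real.cos (u - τ)) τ := by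
      intro τ hτ
      have hτL : τ ∈ Set.Icc (0:ℝ) L := hIcc ⟨hτ.1, hτ.2.trans hu.2⟩
      have h1 : HasDerivAt (fun τ => (inner ℝ (γ' u) (γ τ) : ℝ)) (inner ℝ (γ' u) (γ' τ) : ℝ) τ := by
        have := (hasDerivAt_const τ (γ' u)).inner ℝ (hderiv τ hτL)
        simpa using this
      have h2 : HasDerivAt (fun τ => Real.sin (u - τ)) (-Real.cos (u - τ)) τ := by
        have hsub : HasDerivAt (fun τ : ℝ => u - τ) (-1) τ := by
          simpa using (hasDerivAt_id' τ).const_sub u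
        have := (Real.hasDerivAt_sin (u - τ)).comp τ hsub
        simpa [Function.comp_def] using this
      have h := h1.fun_add h2
      simpa only [hχ, sub_eq_add_neg] using h
    have mono : MonotoneOn χ (Set.Icc t u) := by
      apply monotoneOn_of_deriv_nonneg (convex_Icc t u)
      · exact fun τ hτ => ((hd τ hτ).continuousAt).continuousWithinAt
      · intro τ hτ
        rw [interior_Icc] at hτ
        exact ((hd τ (Set.Ioo_subset_Icc_self hτ)).differentiableAt).differentiableWithinAt
      · intro τ hτ
        rw [interior_Icc] at hτ
        rw [(hd τ (Set.Ioo_subset_Icc_self hτ)).deriv]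
        have hτL : τ ∈ Set.Icc (0:ℝ) L := hIcc ⟨le_of_lt hτ.1, (le_of_lt hτ.2).trans hu.2⟩
        have := hlip τ u hτL huL (le_of_lt hτ.2) (by nlinarith [hu.2, hτ.1])
        linarith
    have hle := mono (Set.left_mem_Icc.mpr (le_of_lt hu.1)) (Set.right_mem_Icc.mpr (le_of_lt hu.1)) (le_of_lt hu.1)
    have : (inner ℝ (γ' u) (γ t) : ℝ) + Real.sin (u - t) ≤ (inner ℝ (γ' u) (γ u) : ℝ) := by
      simpa [hχ] using hle
    rw [inner_sub_right]
    linarith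
  -- Step 2: squared-distance comparison
  set f : ℝ → ℝ := fun u => (inner ℝ (γ u - γ t) (γ u - γ t) : ℝ) - 2 * (1 - Real.cos (u - t)) with hf
  have hfd : ∀ u ∈ Set.Icc t s, HasDerivAt f (2 * (inner ℝ (γ' u) (γ u - γ t) : ℝ) - 2 * Real.sin (u - t)) u := by
    intro u hu
    have huL := hIcc hu
    have hγd : HasDerivAt (fun u => γ u - γ t) (γ' u) u := by
      simpa using (hderiv u huL).sub_const (γ t)
    have h1 : HasDerivAt (fun u => (inner ℝ (γ u - γ t) (γ u - γ t) : ℝ))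
        ((inner ℝ (γ u - γ t) (γ' u) : ℝ) + (inner ℝ (γ' u) (γ u - γ t) : ℝ)) u := hγd.inner ℝ hγd
    have h2 : HasDerivAt (fun u => 2 * (1 - Real.cos (u - t))) (2 * Real.sin (u - t)) u := by
      have hsub : HasDerivAt (fun u : ℝ => u - t) 1 u := by
        simpa using (hasDerivAt_id' u).sub_const t
      have := ((Real.hasDerivAt_cos (u - t)).comp u hsub)
      have h3 : HasDerivAt (fun u : ℝ => 1 - Real.cos (u - t)) (Real.sin (u - t)) u := by
        simpa [Function.comp_def] using this.const_sub (1:ℝ)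
      simpa [mul_comm] using h3.const_mul 2
    have := h1.fun_sub h2
    have hsymm : (inner ℝ (γ u - γ t) (γ' u) : ℝ) = (inner ℝ (γ' u) (γ u - γ t) : ℝ) := real_inner_comm _ _
    rw [hsymm] at this
    exact this.congr_deriv (by ring)
  have mono : MonotoneOn f (Set.Icc t s) := by
    apply monotoneOn_of_deriv_nonneg (convex_Icc t s)
    · exact fun u hu => ((hfd u hu).continuousAt).continuousWithinAt
    · intro u hu
      rw [interior_Icc] at hu
      exact ((hfd u (Set.Ioo_subset_Icc_self hu)).differentiableAt).differentiableWithinAt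
    · intro u hu
      rw [interior_Icc] at hu
      rw [(hfd u (Set.Ioo_subset_Icc_self hu)).deriv]
      have := step1 u ⟨hu.1, le_of_lt hu.2⟩
      linarith
  have hle := mono (Set.left_mem_Icc.mpr (le_of_lt hts)) (Set.right_mem_Icc.mpr (le_of_lt hts)) (le_of_lt hts)
  have hft : f t = 0 := by simp [hf]
  have hfs : 2 * (1 - Real.cos (s - t)) ≤ (inner ℝ (γ s - γ t) (γ s - γ t) : ℝ) := by
    have : f t ≤ f s := hle
    rw [hft] at this
    simp only [hf] at this
    linarith
  rw [real_inner_self_eq_norm_sq] at hfs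
  have hsinsq : Real.cos (s - t) = 2 * Real.cos ((s - t) / 2) ^ 2 - 1 := by
    have h := Real.cos_two_mul ((s - t) / 2)
    rw [show 2 * ((s - t) / 2) = s - t by ring] at h
    exact h
  have hpyth := Real.sin_sq_add_cos_sq ((s - t) / 2)
  have hsinpos : 0 ≤ Real.sin ((s - t) / 2) :=
    Real.sin_nonneg_of_nonneg_of_le_pi (by linarith) (by linarith [Real.pi_pos])
  nlinarith [norm_nonneg (γ s - γ t), sq_nonneg (‖γ s - γ t‖ - 2 * Real.sin ((s - t) / 2))]
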